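/- Let A be a unital complex Banach algebra with property (J), M a unital A-bimodule, n ≥ 3, and let Δ be a 2-local derivation from M_n(A) into M_n(M) that vanishes on the linear span of the matrix units {e_{ij}}_{i,j=1}^n. Then for every i with 1 ≤ i ≤ n, the restriction Δ_{ii} of Δ to A_{ii} = e_{ii} M_n(A) e_{ii} is a derivation from A_{ii} into e_{ii} M_n(M) e_{ii}: it is linear and satisfies Δ(xy) = Δ(x)y + xΔ(y) for all x, y ∈ A_{ii}. -/

import Mathlib

open MulOpposite Matrix

variable (A M : Type*) [NormedRing A] [NormedAlgebra ℂ A] [CompleteSpace A]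
  [AddCommGroup M] [Module ℂ M] [Module A M] [Module Aᵐᵒᵖ M]
  [SMulCommClass A Aᵐᵒᵖ M] [IsScalarTower ℂ A M] [IsScalarTower ℂ Aᵐᵒᵖ M]

/-- `D : A → M` is a derivation from the Banach algebra `A` into the unital
`A`-bimodule `M`: a `ℂ`-linear map with the Leibniz rule (the right action of
`A` on `M` is written via `Aᵐᵒᵖ`). -/
def IsDerivation (D : A → M) : Prop :=
  IsLinearMap ℂ D ∧ ∀ x y : A, D (x * y) = op y • D x + x • D y

variable {n : ℕ}

/-- The left action of `Mₙ(A)` on `Mₙ(M)`: `(x · Y)_{ij} = Σ_k x_{ik} · Y_{kj}`. -/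
def matL (x : Matrix (Fin n) (Fin n) A) (Y : Matrix (Fin n) (Fin n) M) :
    Matrix (Fin n) (Fin n) M :=
  Matrix.of fun i j => ∑ k, x i k • Y k j

/-- The right action of `Mₙ(A)` on `Mₙ(M)`: `(Y · x)_{ij} = Σ_k Y_{ik} · x_{kj}`. -/
def matR (Y : Matrix (Fin n) (Fin n) M) (x : Matrix (Fin n) (Fin n) A) :
    Matrix (Fin n) (Fin n) M :=
  Matrix.of fun i j => ∑ k, op (x k j) • Y i k

/-- A derivation from `Mₙ(A)` into the `Mₙ(A)`-bimodule `Mₙ(M)`. -/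
def IsMatDerivation (D : Matrix (Fin n) (Fin n) A → Matrix (Fin n) (Fin n) M) : Prop :=
  IsLinearMap ℂ D ∧
    ∀ x y : Matrix (Fin n) (Fin n) A, D (x * y) = matR A M (D x) y + matL A M x (D y)

/-- A 2-local derivation from `Mₙ(A)` into `Mₙ(M)`: for each pair of points there
is a derivation agreeing with `Δ` at both of them. -/
def Is2LocalMatDerivation (Δ : Matrix (Fin n) (Fin n) A → Matrix (Fin n) (Fin n) M) : Prop :=
  ∀ x y : Matrix (Fin n) (Fin n) A,
    ∃ D : Matrix (Fin n) (Fin n) A → Matrix (Fin n) (Fin n) M,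
      IsMatDerivation A M D ∧ Δ x = D x ∧ Δ y = D y

/-- The matrix unit `e_{ij}`: the unit of `A` at position `(i,j)`, zeros elsewhere. -/
def matUnit (i j : Fin n) : Matrix (Fin n) (Fin n) A :=
  Matrix.single i j 1

/-- The linear span of the matrix units `{e_{ij}}`. -/
noncomputable def unitSpan (n : ℕ) : Submodule ℂ (Matrix (Fin n) (Fin n) A) :=
  Submodule.span ℂ (Set.range fun p : Fin n × Fin n => Matrix.single p.1 p.2 (1 : A))

/-- The set `Dₙ(A)` of diagonal matrices in `Mₙ(A)`. -/
def diagSet (n : ℕ) : Set (Matrix (Fin n) (Fin n) A) :=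
  {x | ∀ i j : Fin n, i ≠ j → x i j = 0}

/-- A Jordan derivation from `A` into the `A`-bimodule `N`: a `ℂ`-linear map with
`D (x²) = D x · x + x · D x`. -/
def IsJordanDerivation (D : A → M) : Prop :=
  IsLinearMap ℂ D ∧ ∀ x : A, D (x * x) = op x • D x + x • D x

universe u v

/-- Property (J): any Jordan derivation from the algebra `A` into any
`A`-bimodule is a derivation. -/
def PropertyJ (A : Type u) [NormedRing A] [NormedAlgebra ℂ A] [CompleteSpace A] : Prop :=
  ∀ (N : Type v) [AddCommGroup N] [Module ℂ N] [Module A N] [Module Aᵐᵒᵖ N]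
    [SMulCommClass A Aᵐᵒᵖ N] [IsScalarTower ℂ A N] [IsScalarTower ℂ Aᵐᵒᵖ N]
    (D : A → N), IsJordanDerivation A N D → IsDerivation A N D

/-! ### Auxiliary lemmas for the proof of Statement 7 -/

set_option linter.unusedSectionVars false

section Aux

lemma std_mul_same (i j k : Fin n) (c d : A) :
    Matrix.single i j c * Matrix.single j k d =
      Matrix.single i k (c * d) :=
  Matrix.single_mul_single_same (c := c) i j k d

lemma std_mul_ne {j k i l : Fin n} (h : j ≠ k) (c d : A) :
    Matrix.single i j c * Matrix.single k l d = 0 :=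
  Matrix.single_mul_single_of_ne (c := c) i j k h d

/- Basic algebra of `matL` and `matR`. -/

lemma matL_zero_left (Y : Matrix (Fin n) (Fin n) M) : matL A M 0 Y = 0 := by
  ext p q; simp [matL]

lemma matL_zero_right (x : Matrix (Fin n) (Fin n) A) : matL A M x 0 = 0 := by
  ext p q; simp [matL]

lemma matR_zero_left (x : Matrix (Fin n) (Fin n) A) : matR A M 0 x = 0 := by
  ext p q; simp [matR]

lemma matL_add_right (x : Matrix (Fin n) (Fin n) A) (Y Z : Matrix (Fin n) (Fin n) M) :
    matL A M x (Y + Z) = matL A M x Y + matL A M x Z := by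
  ext p q; simp [matL, smul_add, Finset.sum_add_distrib]

lemma matL_add_left (x x' : Matrix (Fin n) (Fin n) A) (Y : Matrix (Fin n) (Fin n) M) :
    matL A M (x + x') Y = matL A M x Y + matL A M x' Y := by
  ext p q; simp [matL, add_smul, Finset.sum_add_distrib]

lemma matR_add_right (Y : Matrix (Fin n) (Fin n) M) (x x' : Matrix (Fin n) (Fin n) A) :
    matR A M Y (x + x') = matR A M Y x + matR A M Y x' := by
  ext p q; simp [matR, add_smul, Finset.sum_add_distrib]

lemma matL_neg_right (x : Matrix (Fin n) (Fin n) A) (Y : Matrix (Fin n) (Fin n) M) :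
    matL A M x (-Y) = -matL A M x Y := by
  ext p q; simp [matL, smul_neg]

lemma matL_matL (x x' : Matrix (Fin n) (Fin n) A) (Y : Matrix (Fin n) (Fin n) M) :
    matL A M x (matL A M x' Y) = matL A M (x * x') Y := by
  ext p q
  show (∑ k, x p k • ∑ l, x' k l • Y l q) = ∑ l, (x * x') p l • Y l q
  simp only [Finset.smul_sum, Matrix.mul_apply, Finset.sum_smul, mul_smul]
  exact Finset.sum_comm

/-- The sandwich `e_{pp} · Y · e_{qq}` is the `(p,q)` entry of `Y` placed at `(p,q)`. -/
lemma sandwich_eq (Y : Matrix (Fin n) (Fin n) M) (p q : Fin n) :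
    matL A M (matUnit A p p) (matR A M Y (matUnit A q q)) =
      Matrix.single p q (Y p q) := by
  ext r s
  show (∑ k, (matUnit A p p) r k • ∑ l, op ((matUnit A q q) l s) • Y k l) = _
  have hinner : ∀ k, (∑ l, op ((matUnit A q q) l s) • Y k l) =
      if q = s then Y k q else 0 := by
    intro k
    rw [Finset.sum_eq_single q]
    · by_cases hs : q = s
      · simp [matUnit, hs]
      · simp [matUnit, hs]
    · intro l _ hl
      simp [matUnit, Ne.symm hl]
    · intro h; exact absurd (Finset.mem_univ q) h
  simp only [hinner]
  rw [Finset.sum_eq_single p]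
  · by_cases hr : p = r
    · by_cases hs : q = s
      · subst hr; subst hs; simp [matUnit]
      · subst hr; simp [matUnit, hs]
    · simp [matUnit, hr, Matrix.single_apply_of_ne _ _ _ _ _ (by tauto)]
  · intro k _ hk
    simp [matUnit, Ne.symm hk]
  · intro h; exact absurd (Finset.mem_univ p) h

lemma corner_rep (x : Matrix (Fin n) (Fin n) A) (i : Fin n) :
    matUnit A i i * x * matUnit A i i = Matrix.single i i (x i i) := by
  ext r s
  by_cases hr : i = r <;> by_cases hs : i = s <;>
    simp [matUnit, Matrix.mul_apply, Matrix.single, ite_and, boole_mul, mul_boole,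
      Finset.sum_ite_eq, Finset.sum_ite_eq', hr, hs, Ne.symm]

lemma unit_mem (p q : Fin n) : matUnit A p q ∈ unitSpan A n :=
  Submodule.subset_span ⟨(p, q), rfl⟩

/- Derivation-level lemmas. -/

lemma deriv_pin {D : Matrix (Fin n) (Fin n) A → Matrix (Fin n) (Fin n) M}
    (hD : IsMatDerivation A M D) {P Q y : Matrix (Fin n) (Fin n) A}
    (hP : D P = 0) (hQ : D Q = 0) (hy : y = P * y * Q) :
    D y = matL A M P (matR A M (D y) Q) := by
  have h1 : D (y * Q) = matR A M (D y) Q := by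
    rw [hD.2 y Q, hQ, matL_zero_right, add_zero]
  have h2 : D (P * (y * Q)) = matL A M P (matR A M (D y) Q) := by
    rw [hD.2 P (y * Q), hP, matR_zero_left, zero_add, h1]
  calc D y = D (P * (y * Q)) := by rw [← mul_assoc, ← hy]
    _ = _ := h2

lemma deriv_pinzero {D : Matrix (Fin n) (Fin n) A → Matrix (Fin n) (Fin n) M}
    (hD : IsMatDerivation A M D) {P Q y : Matrix (Fin n) (Fin n) A}
    (hP : D P = 0) (hQ : D Q = 0) (hy : P * y * Q = 0) :
    matL A M P (matR A M (D y) Q) = 0 := by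
  have h1 : D (y * Q) = matR A M (D y) Q := by
    rw [hD.2 y Q, hQ, matL_zero_right, add_zero]
  have h2 : D (P * (y * Q)) = matL A M P (matR A M (D y) Q) := by
    rw [hD.2 P (y * Q), hP, matR_zero_left, zero_add, h1]
  rw [← h2, ← mul_assoc, hy, hD.1.map_zero]

lemma deriv_sandwich_zero {D : Matrix (Fin n) (Fin n) A → Matrix (Fin n) (Fin n) M}
    (hD : IsMatDerivation A M D) {P Q y : Matrix (Fin n) (Fin n) A}
    (hPy : P * y = 0) (hyQ : y * Q = 0) :
    matL A M P (matR A M (D y) Q) = 0 := by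
  have h : matR A M (D y) Q = -matL A M y (D Q) := by
    have h0 := hD.2 y Q
    rw [hyQ, hD.1.map_zero] at h0
    exact eq_neg_of_add_eq_zero_left h0.symm
  rw [h, matL_neg_right, matL_matL, hPy, matL_zero_left, neg_zero]

lemma matR_unit_apply (Z : Matrix (Fin n) (Fin n) M) (q r : Fin n) :
    matR A M Z (matUnit A q q) r q = Z r q := by
  show (∑ k, op ((matUnit A q q) k q) • Z r k) = Z r q
  rw [Finset.sum_eq_single q]
  · simp [matUnit]
  · intro k _ hk; simp [matUnit, Ne.symm hk]
  · intro h; exact absurd (Finset.mem_univ q) h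

lemma matL_unit_apply (Z : Matrix (Fin n) (Fin n) M) (p s : Fin n) :
    matL A M (matUnit A p p) Z p s = Z p s := by
  show (∑ k, (matUnit A p p) p k • Z k s) = Z p s
  rw [Finset.sum_eq_single p]
  · simp [matUnit]
  · intro k _ hk; simp [matUnit, Ne.symm hk]
  · intro h; exact absurd (Finset.mem_univ p) h

lemma deriv_unit_diag {D : Matrix (Fin n) (Fin n) A → Matrix (Fin n) (Fin n) M}
    (hD : IsMatDerivation A M D) (p : Fin n) :
    D (matUnit A p p) p p = 0 := by
  have hmul : matUnit A p p * matUnit A p p = matUnit A p p := by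
    simp [matUnit]
  have h := hD.2 (matUnit A p p) (matUnit A p p)
  rw [hmul] at h
  have h2 := congrFun (congrFun h p) p
  rw [Matrix.add_apply, matR_unit_apply, matL_unit_apply] at h2
  have h3 := congrArg (fun z => z - D (matUnit A p p) p p) h2
  simpa using h3.symm

end Aux

section Core

variable {Δ : Matrix (Fin n) (Fin n) A → Matrix (Fin n) (Fin n) M}

/-- From the pair `(u, e_{jj} + 2 e_{ii})` we get a derivation agreeing with `Δ` at `u`
and killing both `e_{ii}` and `e_{jj}`. -/
lemma exists_D_pinned (hΔ : Is2LocalMatDerivation A M Δ)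
    (hvan : ∀ t ∈ unitSpan A n, Δ t = 0) {i j : Fin n} (hij : j ≠ i)
    (u : Matrix (Fin n) (Fin n) A) :
    ∃ D, IsMatDerivation A M D ∧ Δ u = D u ∧
      D (matUnit A i i) = 0 ∧ D (matUnit A j j) = 0 := by
  obtain ⟨D, hD, hu, ht⟩ := hΔ u (matUnit A j j + (2 : ℂ) • matUnit A i i)
  have hmem : matUnit A j j + (2 : ℂ) • matUnit A i i ∈ unitSpan A n :=
    Submodule.add_mem _ (unit_mem A j j) (Submodule.smul_mem _ _ (unit_mem A i i))
  have ht0 : D (matUnit A j j + (2 : ℂ) • matUnit A i i) = 0 := by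
    rw [← ht]; exact hvan _ hmem
  have hsq : (matUnit A j j + (2 : ℂ) • matUnit A i i) *
      (matUnit A j j + (2 : ℂ) • matUnit A i i)
      = matUnit A j j + (4 : ℂ) • matUnit A i i := by
    rw [add_mul, mul_add, mul_add, mul_smul_comm, smul_mul_assoc, smul_mul_assoc,
      mul_smul_comm, smul_smul]
    simp only [matUnit, std_mul_same, one_mul,
      std_mul_ne A hij, std_mul_ne A (Ne.symm hij),
      smul_zero, add_zero, zero_add]
    norm_num
  have hDsq : D (matUnit A j j) + (4 : ℂ) • D (matUnit A i i) = 0 := by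
    have h := hD.2 (matUnit A j j + (2 : ℂ) • matUnit A i i)
      (matUnit A j j + (2 : ℂ) • matUnit A i i)
    rw [ht0, matR_zero_left, matL_zero_right, add_zero, hsq] at h
    rw [← hD.1.map_smul, ← hD.1.map_add]
    exact h
  have hDt : D (matUnit A j j) + (2 : ℂ) • D (matUnit A i i) = 0 := by
    rw [← hD.1.map_smul, ← hD.1.map_add]
    exact ht0
  have h2 : (2 : ℂ) • D (matUnit A i i) = 0 := by
    have h := hDsq.trans hDt.symm
    have h' := add_left_cancel h
    have : (4 : ℂ) • D (matUnit A i i) - (2 : ℂ) • D (matUnit A i i)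
        = (2 : ℂ) • D (matUnit A i i) := by
      rw [← sub_smul]; norm_num
    rw [← this, h', sub_self]
  have hi0 : D (matUnit A i i) = 0 := by
    have : D (matUnit A i i) = (2 : ℂ)⁻¹ • ((2 : ℂ) • D (matUnit A i i)) := by
      rw [smul_smul]; norm_num
    rw [this, h2, smul_zero]
  have hj0 : D (matUnit A j j) = 0 := by
    have := hDt
    rw [hi0, smul_zero, add_zero] at this
    exact this
  exact ⟨D, hD, hu, hi0, hj0⟩

/-- Concentration: if `y = e_{pp} y e_{qq}` with `p, q ∈ {i, j}`, then `Δ y` is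
concentrated at the `(p,q)` entry. -/
lemma conc_gen (hΔ : Is2LocalMatDerivation A M Δ)
    (hvan : ∀ t ∈ unitSpan A n, Δ t = 0) {i j : Fin n} (hij : j ≠ i)
    {p q : Fin n} (hp : p = i ∨ p = j) (hq : q = i ∨ q = j)
    {y : Matrix (Fin n) (Fin n) A} (hy : y = matUnit A p p * y * matUnit A q q) :
    Δ y = Matrix.single p q (Δ y p q) := by
  obtain ⟨D, hD, hu, hi0, hj0⟩ := exists_D_pinned A M hΔ hvan hij y
  have hp0 : D (matUnit A p p) = 0 := by rcases hp with rfl | rfl <;> assumption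
  have hq0 : D (matUnit A q q) = 0 := by rcases hq with rfl | rfl <;> assumption
  have h := deriv_pin A M hD hp0 hq0 hy
  rw [← hu] at h
  rw [sandwich_eq] at h
  exact h

/-- If `u - v` has zero `p`-th row-block and zero `q`-th column-block, then `Δ u` and
`Δ v` agree at the `(p, q)` entry. -/
lemma delta_entry_eq (hΔ : Is2LocalMatDerivation A M Δ) {p q : Fin n}
    {u v : Matrix (Fin n) (Fin n) A}
    (h1 : matUnit A p p * (u - v) = 0) (h2 : (u - v) * matUnit A q q = 0) :
    Δ u p q = Δ v p q := by
  obtain ⟨D, hD, hu, hv⟩ := hΔ u v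
  have hDw := deriv_sandwich_zero A M hD h1 h2
  have hDuv : D (u - v) = Δ u - Δ v := by rw [hD.1.map_sub, ← hu, ← hv]
  rw [hDuv, sandwich_eq] at hDw
  have h3 := congrFun (congrFun hDw p) q
  rw [Matrix.single_apply_same, Matrix.zero_apply, Matrix.sub_apply,
    sub_eq_zero] at h3
  exact h3

lemma jordan_delta (hΔ : Is2LocalMatDerivation A M Δ) (x : Matrix (Fin n) (Fin n) A) :
    Δ (x * x) = matR A M (Δ x) x + matL A M x (Δ x) := by
  obtain ⟨D, hD, h1, h2⟩ := hΔ x (x * x)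
  rw [h2, hD.2 x x, ← h1]

lemma homog_delta (hΔ : Is2LocalMatDerivation A M Δ) (c : ℂ) (x : Matrix (Fin n) (Fin n) A) :
    Δ (c • x) = c • Δ x := by
  obtain ⟨D, hD, h1, h2⟩ := hΔ x (c • x)
  rw [h2, hD.1.map_smul, ← h1]

/-- Structure of `Δ` at `τ = a e_{ij} + b e_{ji}`. -/
lemma tau_val (hΔ : Is2LocalMatDerivation A M Δ)
    (hvan : ∀ t ∈ unitSpan A n, Δ t = 0) {i j : Fin n} (hij : j ≠ i) (a b : A) :
    Δ (Matrix.single i j a + Matrix.single j i b) =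
      Matrix.single i j (Δ (Matrix.single i j a) i j) +
        Matrix.single j i (Δ (Matrix.single j i b) j i) := by
  have hij' : i ≠ j := Ne.symm hij
  set τ := Matrix.single i j a + Matrix.single j i b with hτdef
  -- block concentration of Δ τ
  obtain ⟨D, hD, hτ, hi0, hj0⟩ := exists_D_pinned A M hΔ hvan hij τ
  have he : D (matUnit A i i + matUnit A j j) = 0 := by
    rw [hD.1.map_add, hi0, hj0, add_zero]
  have hy : τ = (matUnit A i i + matUnit A j j) * τ * (matUnit A i i + matUnit A j j) := by
    simp only [hτdef, matUnit, add_mul, mul_add, std_mul_same,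
      std_mul_ne A hij, std_mul_ne A hij',
      one_mul, mul_one, add_zero, zero_add, zero_mul, zero_add]
    abel
  have hblock := deriv_pin A M hD he he hy
  rw [matR_add_right, matL_add_right, matL_add_left, matL_add_left] at hblock
  have hii0 : matL A M (matUnit A i i) (matR A M (D τ) (matUnit A i i)) = 0 := by
    refine deriv_pinzero A M hD hi0 hi0 ?_
    simp only [hτdef, matUnit, add_mul, mul_add, std_mul_same,
      std_mul_ne A hij, std_mul_ne A hij',
      one_mul, add_zero, zero_add, zero_mul, mul_zero]
  have hjj0 : matL A M (matUnit A j j) (matR A M (D τ) (matUnit A j j)) = 0 := by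
    refine deriv_pinzero A M hD hj0 hj0 ?_
    simp only [hτdef, matUnit, add_mul, mul_add, std_mul_same,
      std_mul_ne A hij, std_mul_ne A hij',
      one_mul, add_zero, zero_add, zero_mul, mul_zero]
  rw [hii0, hjj0, sandwich_eq, sandwich_eq, zero_add, add_zero] at hblock
  rw [← hτ] at hblock
  -- identify the two entries
  have e1 : Δ τ i j = Δ (Matrix.single i j a) i j := by
    refine delta_entry_eq A M hΔ ?_ ?_
    · rw [hτdef, add_sub_cancel_left, matUnit, std_mul_ne A hij']
    · rw [hτdef, add_sub_cancel_left, matUnit, std_mul_ne A hij']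
  have e2 : Δ τ j i = Δ (Matrix.single j i b) j i := by
    refine delta_entry_eq A M hΔ ?_ ?_
    · rw [hτdef, add_sub_cancel_right, matUnit, std_mul_ne A hij]
    · rw [hτdef, add_sub_cancel_right, matUnit, std_mul_ne A hij]
  rw [e1, e2] at hblock
  exact hblock.trans (add_comm _ _)

/-- The fundamental product formula:
`Δ((ab) e_{ii})_{ii} = Δ(a e_{ij})_{ij} · b + a · Δ(b e_{ji})_{ji}`. -/
lemma core_formula (hΔ : Is2LocalMatDerivation A M Δ)
    (hvan : ∀ t ∈ unitSpan A n, Δ t = 0) {i j : Fin n} (hij : j ≠ i) (a b : A) :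
    Δ (Matrix.single i i (a * b)) i i =
      op b • (Δ (Matrix.single i j a) i j) +
        a • (Δ (Matrix.single j i b) j i) := by
  have hij' : i ≠ j := Ne.symm hij
  set τ := Matrix.single i j a + Matrix.single j i b with hτdef
  have hττ : τ * τ = Matrix.single i i (a * b) + Matrix.single j j (b * a) := by
    simp only [hτdef, add_mul, mul_add, std_mul_same,
      std_mul_ne A hij, std_mul_ne A hij']
    abel
  have hjord := jordan_delta A M hΔ τ
  have hval : Δ (τ * τ) i i = Δ (Matrix.single i i (a * b)) i i := by
    refine delta_entry_eq A M hΔ ?_ ?_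
    · rw [hττ, add_sub_cancel_left, matUnit, std_mul_ne A hij']
    · rw [hττ, add_sub_cancel_left, matUnit, std_mul_ne A hij]
  have hτval := tau_val A M hΔ hvan hij a b
  rw [← hτdef] at hτval
  set P := Δ (Matrix.single i j a) i j
  set Q := Δ (Matrix.single j i b) j i
  have hR : (matR A M (Δ τ) τ) i i = op b • P := by
    show (∑ k, op (τ k i) • (Δ τ) i k) = op b • P
    rw [Finset.sum_eq_single j]
    · rw [hτval]
      have h1 : τ j i = b := by
        simp [hτdef, Matrix.single_apply_of_ne _ _ _ _ _ (show ¬(i = j ∧ j = i) by tauto)]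
      have h2 : (Matrix.single i j P + Matrix.single j i Q) i j = P := by
        simp [Matrix.single_apply_of_ne _ _ _ _ _ (show ¬(j = i ∧ i = j) by tauto)]
      rw [h1, h2]
    · intro k _ hk
      have h2 : (Δ τ) i k = 0 := by
        rw [hτval]
        simp [Matrix.single_apply_of_ne _ _ _ _ _ (show ¬(i = i ∧ j = k) by tauto),
          Matrix.single_apply_of_ne _ _ _ _ _ (show ¬(j = i ∧ i = k) by tauto)]
      rw [h2, smul_zero]
    · intro h; exact absurd (Finset.mem_univ j) h
  have hL : (matL A M τ (Δ τ)) i i = a • Q := by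
    show (∑ k, τ i k • (Δ τ) k i) = a • Q
    rw [Finset.sum_eq_single j]
    · rw [hτval]
      have h1 : τ i j = a := by
        simp [hτdef, Matrix.single_apply_of_ne _ _ _ _ _ (show ¬(j = i ∧ i = j) by tauto)]
      have h2 : (Matrix.single i j P + Matrix.single j i Q) j i = Q := by
        simp [Matrix.single_apply_of_ne _ _ _ _ _ (show ¬(i = j ∧ j = i) by tauto)]
      rw [h1, h2]
    · intro k _ hk
      have h1 : τ i k = 0 := by
        simp [hτdef, Matrix.single_apply_of_ne _ _ _ _ _ (show ¬(i = i ∧ j = k) by tauto),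
          Matrix.single_apply_of_ne _ _ _ _ _ (show ¬(j = i ∧ i = k) by tauto)]
      rw [h1, zero_smul]
    · intro h; exact absurd (Finset.mem_univ j) h
  calc Δ (Matrix.single i i (a * b)) i i
      = Δ (τ * τ) i i := hval.symm
    _ = (matR A M (Δ τ) τ + matL A M τ (Δ τ)) i i := by rw [hjord]
    _ = op b • P + a • Q := by rw [Matrix.add_apply, hR, hL]

/-- `Δ(a e_{ij})_{ij} = Δ(a e_{ii})_{ii}`. -/
lemma g_eq_f (hΔ : Is2LocalMatDerivation A M Δ)
    (hvan : ∀ t ∈ unitSpan A n, Δ t = 0) {i j : Fin n} (hij : j ≠ i) (a : A) :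
    Δ (Matrix.single i j a) i j = Δ (Matrix.single i i a) i i := by
  have h := core_formula A M hΔ hvan hij a 1
  rw [mul_one] at h
  have hz : Δ (Matrix.single j i (1 : A)) = 0 := hvan _ (unit_mem A j i)
  rw [hz] at h
  simpa using h.symm

/-- `Δ(b e_{ji})_{ji} = Δ(b e_{ii})_{ii}`. -/
lemma h_eq_f (hΔ : Is2LocalMatDerivation A M Δ)
    (hvan : ∀ t ∈ unitSpan A n, Δ t = 0) {i j : Fin n} (hij : j ≠ i) (b : A) :
    Δ (Matrix.single j i b) j i = Δ (Matrix.single i i b) i i := by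
  have h := core_formula A M hΔ hvan hij 1 b
  rw [one_mul] at h
  have hz : Δ (Matrix.single i j (1 : A)) = 0 := hvan _ (unit_mem A i j)
  rw [hz] at h
  simpa using h.symm

/-- Leibniz rule for the corner function `f a = Δ(a e_{ii})_{ii}`. -/
lemma leibniz_f (hΔ : Is2LocalMatDerivation A M Δ)
    (hvan : ∀ t ∈ unitSpan A n, Δ t = 0) {i j : Fin n} (hij : j ≠ i) (a b : A) :
    Δ (Matrix.single i i (a * b)) i i =
      op b • (Δ (Matrix.single i i a) i i) +
        a • (Δ (Matrix.single i i b) i i) := by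
  rw [core_formula A M hΔ hvan hij a b, g_eq_f A M hΔ hvan hij a, h_eq_f A M hΔ hvan hij b]

/-- Translation invariance: `f (a + λ·1) = f a`. -/
lemma trans_f (hΔ : Is2LocalMatDerivation A M Δ) (i : Fin n) (a : A) (lam : ℂ) :
    Δ (Matrix.single i i (a + lam • (1 : A))) i i =
      Δ (Matrix.single i i a) i i := by
  obtain ⟨D, hD, h1, h2⟩ := hΔ (Matrix.single i i a)
    (Matrix.single i i (a + lam • (1 : A)))
  have hmat : Matrix.single i i (a + lam • (1 : A)) - Matrix.single i i a
      = lam • matUnit A i i := by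
    rw [Matrix.single_add, add_sub_cancel_left, matUnit, Matrix.smul_single]
  have hdiff : D (Matrix.single i i (a + lam • (1 : A)))
      - D (Matrix.single i i a) = lam • D (matUnit A i i) := by
    rw [← hD.1.map_sub, hmat, hD.1.map_smul]
  rw [← h1, ← h2] at hdiff
  have hent := congrFun (congrFun hdiff i) i
  rw [Matrix.sub_apply, Matrix.smul_apply, deriv_unit_diag A M hD i, smul_zero,
    sub_eq_zero] at hent
  exact hent

/-- Additivity of `f` when the second summand is invertible. -/
lemma add_f_unit (hΔ : Is2LocalMatDerivation A M Δ)
    (hvan : ∀ t ∈ unitSpan A n, Δ t = 0) {i j : Fin n} (hij : j ≠ i) (a b : A)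
    (hb : IsUnit b) :
    Δ (Matrix.single i i (a + b)) i i =
      Δ (Matrix.single i i a) i i + Δ (Matrix.single i i b) i i := by
  obtain ⟨u, rfl⟩ := hb
  set c := a * (↑u⁻¹ : A) with hc
  have hca : c * (↑u : A) = a := Units.inv_mul_cancel_right a u
  have h1 : a + (↑u : A) = (c + 1) * ↑u := by
    rw [add_mul, one_mul, hca]
  have hc1 : c + (1 : A) = c + (1 : ℂ) • (1 : A) := by rw [one_smul]
  calc Δ (Matrix.single i i (a + (↑u : A))) i i
      = Δ (Matrix.single i i ((c + 1) * ↑u)) i i := by rw [h1]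
    _ = op (↑u : A) • (Δ (Matrix.single i i (c + 1)) i i) +
          (c + 1) • (Δ (Matrix.single i i (↑u : A)) i i) :=
        leibniz_f A M hΔ hvan hij _ _
    _ = op (↑u : A) • (Δ (Matrix.single i i c) i i) +
          (c • (Δ (Matrix.single i i (↑u : A)) i i) +
            Δ (Matrix.single i i (↑u : A)) i i) := by
        rw [hc1, trans_f A M hΔ i c 1, add_smul]
        simp only [one_smul]
    _ = (op (↑u : A) • (Δ (Matrix.single i i c) i i) +
          c • (Δ (Matrix.single i i (↑u : A)) i i)) +
          Δ (Matrix.single i i (↑u : A)) i i := by abel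
    _ = Δ (Matrix.single i i (c * ↑u)) i i +
          Δ (Matrix.single i i (↑u : A)) i i := by
        rw [leibniz_f A M hΔ hvan hij c (↑u : A)]
    _ = Δ (Matrix.single i i a) i i +
          Δ (Matrix.single i i (↑u : A)) i i := by rw [hca]

/-- Full additivity of the corner function. -/
lemma add_f (hΔ : Is2LocalMatDerivation A M Δ)
    (hvan : ∀ t ∈ unitSpan A n, Δ t = 0) {i j : Fin n} (hij : j ≠ i) (a b : A) :
    Δ (Matrix.single i i (a + b)) i i =
      Δ (Matrix.single i i a) i i + Δ (Matrix.single i i b) i i := by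
  set μ : ℝ := ‖b‖ + 1 with hμ
  have hμpos : (0 : ℝ) < μ := by positivity
  set lam : ℂ := (μ : ℂ) with hlam
  have hl0 : lam ≠ 0 := by
    simp [hlam, Complex.ofReal_ne_zero]
    exact ne_of_gt hμpos
  have hnorm : ‖lam⁻¹ • b‖ < 1 := by
    rw [norm_smul, norm_inv, hlam, Complex.norm_real, Real.norm_eq_abs,
      abs_of_pos hμpos, inv_mul_eq_div, div_lt_one hμpos, hμ]
    exact lt_add_one _
  have hu1 : IsUnit ((1 : A) - lam⁻¹ • b) := ⟨Units.oneSub _ hnorm, rfl⟩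
  have hunit : IsUnit (b - lam • (1 : A)) := by
    have heq : b - lam • (1 : A) = (algebraMap ℂ A (-lam)) * ((1 : A) - lam⁻¹ • b) := by
      rw [← Algebra.smul_def, smul_sub, smul_smul, neg_mul, mul_inv_cancel₀ hl0,
        neg_smul, neg_smul, one_smul, sub_neg_eq_add]
      abel
    rw [heq]
    exact (IsUnit.map (algebraMap ℂ A) (isUnit_iff_ne_zero.2 (neg_ne_zero.2 hl0))).mul hu1
  have hsplit : a + b = (a + lam • (1 : A)) + (b - lam • (1 : A)) := by abel
  have hbtrans : Δ (Matrix.single i i (b - lam • (1 : A))) i i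
      = Δ (Matrix.single i i b) i i := by
    have : b - lam • (1 : A) = b + (-lam) • (1 : A) := by
      rw [neg_smul, sub_eq_add_neg]
    rw [this, trans_f A M hΔ i b (-lam)]
  calc Δ (Matrix.single i i (a + b)) i i
      = Δ (Matrix.single i i ((a + lam • (1 : A)) + (b - lam • (1 : A)))) i i := by
        rw [← hsplit]
    _ = Δ (Matrix.single i i (a + lam • (1 : A))) i i +
          Δ (Matrix.single i i (b - lam • (1 : A))) i i :=
        add_f_unit A M hΔ hvan hij _ _ hunit
    _ = Δ (Matrix.single i i a) i i + Δ (Matrix.single i i b) i i := by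
        rw [trans_f A M hΔ i a lam, hbtrans]

/-- Corner concentration in convenient form. -/
lemma conc_corner (hΔ : Is2LocalMatDerivation A M Δ)
    (hvan : ∀ t ∈ unitSpan A n, Δ t = 0) {i j : Fin n} (hij : j ≠ i) (a : A) :
    Δ (Matrix.single i i a) =
      Matrix.single i i (Δ (Matrix.single i i a) i i) := by
  refine conc_gen A M hΔ hvan hij (Or.inl rfl) (Or.inl rfl) ?_
  simp [matUnit]

lemma matR_std_corner (i : Fin n) (P : M) (b : A) :
    matR A M (Matrix.single i i P) (Matrix.single i i b) =
      Matrix.single i i (op b • P) := by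
  ext r s
  show (∑ k, op ((Matrix.single i i b) k s) • (Matrix.single i i P) r k) = _
  rw [Finset.sum_eq_single i]
  · simp only [Matrix.single, Matrix.of_apply, ite_and]
    by_cases hr : i = r <;> by_cases hs : i = s <;> simp [hr, hs] <;>
      split_ifs <;> simp_all
  · intro k _ hk
    have h0 : (Matrix.single i i P) r k = 0 :=
      Matrix.single_apply_of_ne _ _ _ _ _ (fun h => hk h.2.symm)
    rw [h0, smul_zero]
  · intro h; exact absurd (Finset.mem_univ i) h

lemma matL_std_corner (i : Fin n) (a : A) (Q : M) :
    matL A M (Matrix.single i i a) (Matrix.single i i Q) =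
      Matrix.single i i (a • Q) := by
  ext r s
  show (∑ k, (Matrix.single i i a) r k • (Matrix.single i i Q) k s) = _
  rw [Finset.sum_eq_single i]
  · simp only [Matrix.single, Matrix.of_apply, ite_and]
    by_cases hr : i = r <;> by_cases hs : i = s <;> simp [hr, hs] <;>
      split_ifs <;> simp_all
  · intro k _ hk
    have h0 : (Matrix.single i i a) r k = 0 :=
      Matrix.single_apply_of_ne _ _ _ _ _ (fun h => hk h.2.symm)
    rw [h0, zero_smul]
  · intro h; exact absurd (Finset.mem_univ i) h

end Core

/-- if `A` has property (J) and a 2-local derivation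
`Δ : Mₙ(A) → Mₙ(M)` (`n ≥ 3`) vanishes on the span of the matrix units, then the
restriction of `Δ` to each corner `A_{ii} = e_{ii} Mₙ(A) e_{ii}` is a derivation
into `e_{ii} Mₙ(M) e_{ii}`: additive, `ℂ`-homogeneous, and Leibniz. -/
theorem twoLocal_corner_derivation (hJ : PropertyJ A) (n : ℕ) (hn : 3 ≤ n)
    (Δ : Matrix (Fin n) (Fin n) A → Matrix (Fin n) (Fin n) M)
    (hΔ : Is2LocalMatDerivation A M Δ)
    (hvan : ∀ t ∈ unitSpan A n, Δ t = 0) :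
    ∀ i : Fin n,
      (∀ x y : Matrix (Fin n) (Fin n) A,
        x = matUnit A i i * x * matUnit A i i →
        y = matUnit A i i * y * matUnit A i i →
        Δ (x + y) = Δ x + Δ y) ∧
      (∀ (c : ℂ) (x : Matrix (Fin n) (Fin n) A),
        x = matUnit A i i * x * matUnit A i i →
        Δ (c • x) = c • Δ x) ∧
      (∀ x y : Matrix (Fin n) (Fin n) A,
        x = matUnit A i i * x * matUnit A i i →
        y = matUnit A i i * y * matUnit A i i →
        Δ (x * y) = matR A M (Δ x) y + matL A M x (Δ y)) := by
  intro i
  have hcard : 1 < Fintype.card (Fin n) := by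
    rw [Fintype.card_fin]; omega
  obtain ⟨j, hij⟩ := Fintype.exists_ne_of_one_lt_card hcard i
  refine ⟨?_, ?_, ?_⟩
  · -- additivity
    intro x y hx hy
    have hx' : x = Matrix.single i i (x i i) := hx.trans (corner_rep A x i)
    have hy' : y = Matrix.single i i (y i i) := hy.trans (corner_rep A y i)
    have hxy : x + y = Matrix.single i i (x i i + y i i) := by
      rw [Matrix.single_add, ← hx', ← hy']
    rw [hxy]
    calc Δ (Matrix.single i i (x i i + y i i))
        = Matrix.single i i
            (Δ (Matrix.single i i (x i i + y i i)) i i) :=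
          conc_corner A M hΔ hvan hij _
      _ = Matrix.single i i
            (Δ (Matrix.single i i (x i i)) i i +
              Δ (Matrix.single i i (y i i)) i i) := by
          rw [add_f A M hΔ hvan hij]
      _ = Matrix.single i i (Δ (Matrix.single i i (x i i)) i i) +
            Matrix.single i i (Δ (Matrix.single i i (y i i)) i i) :=
          Matrix.single_add _ _ _ _
      _ = Δ (Matrix.single i i (x i i)) + Δ (Matrix.single i i (y i i)) := by
          rw [← conc_corner A M hΔ hvan hij, ← conc_corner A M hΔ hvan hij]
      _ = Δ x + Δ y := by rw [← hx', ← hy']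
  · -- homogeneity
    intro c x _
    exact homog_delta A M hΔ c x
  · -- Leibniz
    intro x y hx hy
    have hx' : x = Matrix.single i i (x i i) := hx.trans (corner_rep A x i)
    have hy' : y = Matrix.single i i (y i i) := hy.trans (corner_rep A y i)
    have hmul : x * y = Matrix.single i i (x i i * y i i) := by
      conv_lhs => rw [hx', hy']
      rw [std_mul_same]
    rw [hmul]
    calc Δ (Matrix.single i i (x i i * y i i))
        = Matrix.single i i
            (Δ (Matrix.single i i (x i i * y i i)) i i) :=
          conc_corner A M hΔ hvan hij _
      _ = Matrix.single i i
            (op (y i i) • (Δ (Matrix.single i i (x i i)) i i) +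
              x i i • (Δ (Matrix.single i i (y i i)) i i)) := by
          rw [leibniz_f A M hΔ hvan hij]
      _ = Matrix.single i i
            (op (y i i) • (Δ (Matrix.single i i (x i i)) i i)) +
          Matrix.single i i
            (x i i • (Δ (Matrix.single i i (y i i)) i i)) :=
          Matrix.single_add _ _ _ _
      _ = matR A M (Matrix.single i i (Δ (Matrix.single i i (x i i)) i i))
            (Matrix.single i i (y i i)) +
          matL A M (Matrix.single i i (x i i))
            (Matrix.single i i (Δ (Matrix.single i i (y i i)) i i)) := by
          rw [matR_std_corner, matL_std_corner]
      _ = matR A M (Δ x) y + matL A M x (Δ y) := by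
          rw [← conc_corner A M hΔ hvan hij, ← conc_corner A M hΔ hvan hij, ← hx', ← hy']
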